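/- arXiv:1812.03688 — 2 statements merged into one kernel-verified Lean document; each statement's English description precedes it below -/
import Mathlib

section
/- Let ω ∈ [0,1] and let B ∈ C^{n×n}. If the ω-comparison matrix B_ω is a nonsingular M-matrix, then B is nonsingular and |B⁻¹| ≤ (B_ω)⁻¹ entrywise. -/
open Matrix Filter Kronecker

noncomputable section

/-- The ω-weighted linear functional `z ↦ ω·Re z + (1-ω)·Im z`. -/
def wlin (ω : ℝ) (z : ℂ) : ℝ := ω * z.re + (1 - ω) * z.im

/-- The ω-comparison matrix of a complex square matrix. -/
def omegaComp {N : Type*} [DecidableEq N] (ω : ℝ) (B : Matrix N N ℂ) : Matrix N N ℝ :=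
  Matrix.of fun i j => if i = j then wlin ω (B i i) else -‖B i j‖

/-- A real square matrix is a nonsingular M-matrix: nonpositive off-diagonal entries and
`M *ᵥ u > 0` entrywise for some entrywise positive `u`. -/
def IsNonsingMMatrix {N : Type*} [Fintype N] (M : Matrix N N ℝ) : Prop :=
  (∀ i j, i ≠ j → M i j ≤ 0) ∧ ∃ u : N → ℝ, (∀ i, 0 < u i) ∧ ∀ i, 0 < (M *ᵥ u) i

/-- Entrywise absolute value of a complex matrix. -/
def cabs {α β : Type*} (M : Matrix α β ℂ) : Matrix α β ℝ :=
  Matrix.of fun i j => ‖M i j‖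

/-- Sign lemma: for a nonsingular M-matrix, `M *ᵥ x ≥ 0` implies `x ≥ 0`. -/
lemma mmatrix_sign {n : ℕ} {M : Matrix (Fin n) (Fin n) ℝ} (hM : IsNonsingMMatrix M)
    {x : Fin n → ℝ} (hx : ∀ i, 0 ≤ (M *ᵥ x) i) : ∀ i, 0 ≤ x i := by
  obtain ⟨hoff, u, hu, hMu⟩ := hM
  by_contra h
  push_neg at h
  obtain ⟨i, hi⟩ := h
  obtain ⟨i0, -, h0⟩ := Finset.exists_min_image Finset.univ (fun i => x i / u i)
    ⟨i, Finset.mem_univ i⟩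
  set t := x i0 / u i0 with ht
  have htneg : t < 0 := lt_of_le_of_lt (h0 i (Finset.mem_univ i))
    (div_neg_of_neg_of_pos hi (hu i))
  set z : Fin n → ℝ := x - t • u with hz
  have hznn : ∀ j, 0 ≤ z j := by
    intro j
    have : t ≤ x j / u j := h0 j (Finset.mem_univ j)
    have := (le_div_iff₀ (hu j)).mp this
    simp [hz]
    linarith
  have hz0 : z i0 = 0 := by
    simp [hz, ht]
    rw [div_mul_cancel₀ _ (hu i0).ne']
    ring
  have hA : 0 < (M *ᵥ z) i0 := by
    rw [hz, Matrix.mulVec_sub, Matrix.mulVec_smul]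
    have h1 := hx i0
    have h2 := hMu i0
    simp only [Pi.sub_apply, Pi.smul_apply, smul_eq_mul]
    nlinarith
  have hB : (M *ᵥ z) i0 ≤ 0 := by
    rw [Matrix.mulVec]
    apply Finset.sum_nonpos
    intro j _
    rcases eq_or_ne j i0 with rfl | hji
    · simp [dotProduct, hz0]
    · exact mul_nonpos_of_nonpos_of_nonneg (hoff i0 j (Ne.symm hji)) (hznn j)
  linarith

lemma wlin_le_abs {ω : ℝ} (hω : ω ∈ Set.Icc (0:ℝ) 1) (z : ℂ) : wlin ω z ≤ ‖z‖ := by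
  obtain ⟨h0, h1⟩ := hω
  have hre := Complex.re_le_norm z
  have him := Complex.im_le_norm z
  unfold wlin
  nlinarith

/-- If the ω-comparison matrix `B_ω` of a complex square matrix `B` is a
nonsingular M-matrix, then `B` is nonsingular and `|B⁻¹| ≤ (B_ω)⁻¹` entrywise. -/
theorem stmt0 {n : ℕ} (ω : ℝ) (hω : ω ∈ Set.Icc (0 : ℝ) 1)
    (B : Matrix (Fin n) (Fin n) ℂ)
    (hM : IsNonsingMMatrix (omegaComp ω B)) :
    IsUnit B.det ∧ ∀ i j, ‖B⁻¹ i j‖ ≤ (omegaComp ω B)⁻¹ i j := by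
  set M := omegaComp ω B with hMdef
  -- key triangle inequality
  have key : ∀ (x : Fin n → ℂ) (i : Fin n),
      (M *ᵥ fun j => ‖x j‖) i ≤ ‖(B *ᵥ x) i‖ := by
    intro x i
    have hsplit : (B *ᵥ x) i = B i i * x i + ∑ j ∈ Finset.univ.erase i, B i j * x j := by
      rw [Matrix.mulVec, dotProduct, ← Finset.add_sum_erase _ _ (Finset.mem_univ i)]
    have hMsplit : (M *ᵥ fun j => ‖x j‖) i
        = wlin ω (B i i) * ‖x i‖
          + ∑ j ∈ Finset.univ.erase i, -(‖B i j‖) * ‖x j‖ := by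
      rw [Matrix.mulVec, dotProduct, ← Finset.add_sum_erase _ _ (Finset.mem_univ i)]
      congr 1
      · simp [hMdef, omegaComp]
      · apply Finset.sum_congr rfl
        intro j hj
        have hij : i ≠ j := (Finset.ne_of_mem_erase hj).symm
        simp [hMdef, omegaComp, hij]
    have htri : ‖B i i * x i‖
        ≤ ‖(B *ᵥ x) i‖ + ∑ j ∈ Finset.univ.erase i,
            ‖B i j‖ * ‖x j‖ := by
      have : B i i * x i = (B *ᵥ x) i - ∑ j ∈ Finset.univ.erase i, B i j * x j := by
        rw [hsplit]; ring
      rw [this]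
      calc ‖(B *ᵥ x) i - ∑ j ∈ Finset.univ.erase i, B i j * x j‖
          ≤ ‖(B *ᵥ x) i‖ + ‖∑ j ∈ Finset.univ.erase i, B i j * x j‖ := by
            exact norm_sub_le _ _
        _ ≤ _ := by
            gcongr
            calc ‖∑ j ∈ Finset.univ.erase i, B i j * x j‖
                ≤ ∑ j ∈ Finset.univ.erase i, ‖B i j * x j‖ := by
                  exact norm_sum_le _ _
              _ = _ := by simp [_root_.map_mul]
    have hw : wlin ω (B i i) * ‖x i‖ ≤ ‖B i i‖ * ‖x i‖ :=
      mul_le_mul_of_nonneg_right (wlin_le_abs hω _) (norm_nonneg _)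
    rw [hMsplit]
    have : ‖B i i‖ * ‖x i‖ = ‖B i i * x i‖ :=
      (norm_mul _ _).symm
    simp only [neg_mul, Finset.sum_neg_distrib]
    linarith [htri, hw.trans_eq this]
  -- B is injective on vectors
  have hBdet : IsUnit B.det := by
    rw [isUnit_iff_ne_zero]
    intro hdet
    obtain ⟨v, hv, hv0⟩ := (Matrix.exists_mulVec_eq_zero_iff).mpr hdet
    have h1 : ∀ i, (M *ᵥ fun j => ‖v j‖) i ≤ 0 := by
      intro i
      have := key v i
      rw [hv0] at this
      simpa using this
    have h2 : ∀ i, 0 ≤ (M *ᵥ (-fun j => ‖v j‖)) i := by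
      intro i
      rw [Matrix.mulVec_neg]
      simpa using h1 i
    have h3 := mmatrix_sign hM h2
    apply hv
    funext i
    have := h3 i
    simp only [Pi.neg_apply] at this
    have h4 : ‖v i‖ ≤ 0 := by linarith
    have := norm_nonneg (v i)
    have : ‖v i‖ = 0 := le_antisymm h4 this
    simpa using this
  -- M is invertible
  have hMdet : IsUnit M.det := by
    rw [isUnit_iff_ne_zero]
    intro hdet
    obtain ⟨v, hv, hv0⟩ := (Matrix.exists_mulVec_eq_zero_iff).mpr hdet
    have h1 : ∀ i, 0 ≤ v i := mmatrix_sign hM (by rw [hv0]; intro i; simp)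
    have h2 : ∀ i, 0 ≤ (-v) i := mmatrix_sign hM
      (by rw [Matrix.mulVec_neg, hv0]; intro i; simp)
    apply hv
    funext i
    have := h2 i
    simp only [Pi.neg_apply] at this
    show v i = 0
    linarith [h1 i]
  -- M⁻¹ is entrywise nonneg
  have hMinv : ∀ i j, 0 ≤ M⁻¹ i j := by
    intro i j
    have hcol : M *ᵥ (fun i => M⁻¹ i j) = Pi.single j 1 := by
      have : (fun i => M⁻¹ i j) = M⁻¹ *ᵥ Pi.single j 1 := by
        funext i; simp [Matrix.mulVec_single]
      rw [this, Matrix.mulVec_mulVec, Matrix.mul_nonsing_inv M hMdet, Matrix.one_mulVec]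
    have := mmatrix_sign hM (x := fun i => M⁻¹ i j) (by
      rw [hcol]; intro i
      rcases eq_or_ne i j with rfl | h
      · simp
      · simp [Pi.single_apply, h])
    exact this i
  refine ⟨hBdet, ?_⟩
  intro i j
  -- column j of B⁻¹
  set xc : Fin n → ℂ := fun i => B⁻¹ i j with hxc
  have hBxc : B *ᵥ xc = Pi.single j 1 := by
    have : xc = B⁻¹ *ᵥ Pi.single j 1 := by
      funext i; simp [hxc, Matrix.mulVec_single]
    rw [this, Matrix.mulVec_mulVec, Matrix.mul_nonsing_inv B hBdet, Matrix.one_mulVec]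
  set v : Fin n → ℝ := fun i => ‖xc i‖ with hv
  have hMv : ∀ i, (M *ᵥ v) i ≤ (Pi.single j 1 : Fin n → ℝ) i := by
    intro i
    have := key xc i
    rw [hBxc] at this
    refine this.trans_eq ?_
    rcases eq_or_ne i j with rfl | h
    · simp
    · simp [Pi.single_apply, h]
  have hrecover : M⁻¹ *ᵥ (M *ᵥ v) = v := by
    rw [Matrix.mulVec_mulVec, Matrix.nonsing_inv_mul M hMdet, Matrix.one_mulVec]
  have hmono : (M⁻¹ *ᵥ (M *ᵥ v)) i ≤ (M⁻¹ *ᵥ (Pi.single j 1 : Fin n → ℝ)) i := by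
    rw [Matrix.mulVec, Matrix.mulVec, dotProduct, dotProduct]
    apply Finset.sum_le_sum
    intro k _
    exact mul_le_mul_of_nonneg_left (hMv k) (hMinv i k)
  rw [hrecover] at hmono
  have : (M⁻¹ *ᵥ (Pi.single j 1 : Fin n → ℝ)) i = M⁻¹ i j := by
    simp [Matrix.mulVec_single]
  rw [this] at hmono
  exact hmono
end
end

section
/- Let ω ∈ [0,1] and let B ∈ C^{N×N} be partitioned as B = [[B₁₁, B₁₂], [B₂₁, B₂₂]] with B₁₁ and B₂₂ square. Suppose B_ω is a nonsingular M-matrix. Then B₁₁ and B₂₂ are invertible, and with S₁₁ = B₁₁ − B₁₂B₂₂⁻¹B₂₁ and S₂₂ = B₂₂ − B₂₁B₁₁⁻¹B₁₂, the four matrices (B₁₁)_ω, (B₂₂)_ω, (S₁₁)_ω and (S₂₂)_ω are nonsingular M-matrices. Moreover, if B_ω·1 > 0 entrywise, then (B₁₁)_ω·1 > 0, (B₂₂)_ω·1 > 0, (S₁₁)_ω·1 > 0 and (S₂₂)_ω·1 > 0. -/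
open Matrix Filter Kronecker

noncomputable section

lemma abs_wlin_le {ω : ℝ} (hω : ω ∈ Set.Icc (0:ℝ) 1) (z : ℂ) : |wlin ω z| ≤ ‖z‖ := by
  obtain ⟨h0, h1⟩ := hω
  have hre := Complex.abs_re_le_norm z
  have him := Complex.abs_im_le_norm z
  have h2 : |wlin ω z| ≤ ω * |z.re| + (1 - ω) * |z.im| := by
    calc |wlin ω z| ≤ |ω * z.re| + |(1-ω) * z.im| := abs_add_le _ _
    _ = ω * |z.re| + (1-ω) * |z.im| := by
        rw [abs_mul, abs_mul, abs_of_nonneg h0, abs_of_nonneg (sub_nonneg.mpr h1)]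
  nlinarith [mul_le_mul_of_nonneg_left hre h0, mul_le_mul_of_nonneg_left him (by linarith : (0:ℝ) ≤ 1 - ω)]

lemma wlin_sub (ω : ℝ) (z w : ℂ) : wlin ω (z - w) = wlin ω z - wlin ω w := by
  simp [wlin, Complex.sub_re, Complex.sub_im]; ring

lemma omegaComp_mulVec {ι : Type*} [Fintype ι] [DecidableEq ι] (ω : ℝ)
    (A : Matrix ι ι ℂ) (u : ι → ℝ) (i : ι) :
    (omegaComp ω A *ᵥ u) i
      = wlin ω (A i i) * u i - ∑ j ∈ Finset.univ.erase i, ‖A i j‖ * u j := by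
  simp only [mulVec, dotProduct, omegaComp, of_apply]
  rw [← Finset.add_sum_erase _ _ (Finset.mem_univ i), if_pos rfl]
  have : ∑ j ∈ Finset.univ.erase i, (if i = j then wlin ω (A i i) else -‖A i j‖) * u j
      = - ∑ j ∈ Finset.univ.erase i, ‖A i j‖ * u j := by
    rw [← Finset.sum_neg_distrib]
    refine Finset.sum_congr rfl fun j hj => ?_
    rw [if_neg (Ne.symm (Finset.ne_of_mem_erase hj))]; ring
  rw [this]; ring

lemma cabs_mulVec_nonneg {α β : Type*} [Fintype β] (M : Matrix α β ℂ) (v : β → ℝ)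
    (hv : ∀ j, 0 ≤ v j) (i : α) : 0 ≤ (cabs M *ᵥ v) i :=
  Finset.sum_nonneg fun j _ => mul_nonneg (norm_nonneg (M i j)) (hv j)

lemma cabs_mulVec_mono {α β : Type*} [Fintype β] (M : Matrix α β ℂ) {v w : β → ℝ}
    (hvw : ∀ j, v j ≤ w j) (i : α) : (cabs M *ᵥ v) i ≤ (cabs M *ᵥ w) i :=
  Finset.sum_le_sum fun j _ => mul_le_mul_of_nonneg_left (hvw j) (norm_nonneg (M i j))

lemma cabs_mul_mulVec {α β γ : Type*} [Fintype β] [Fintype γ] (M : Matrix α β ℂ)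
    (N : Matrix β γ ℂ) (v : γ → ℝ) (hv : ∀ j, 0 ≤ v j) (i : α) :
    (cabs (M * N) *ᵥ v) i ≤ (cabs M *ᵥ (cabs N *ᵥ v)) i := by
  simp only [mulVec, dotProduct, cabs, of_apply, Matrix.mul_apply]
  calc ∑ j, ‖∑ l, M i l * N l j‖ * v j
      ≤ ∑ j, (∑ l, ‖M i l‖ * ‖N l j‖) * v j := by
        refine Finset.sum_le_sum fun j _ => mul_le_mul_of_nonneg_right ?_ (hv j)
        calc ‖∑ l, M i l * N l j‖ ≤ ∑ l, ‖M i l * N l j‖ :=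
              norm_sum_le _ _
        _ = ∑ l, ‖M i l‖ * ‖N l j‖ := by simp [_root_.map_mul]
    _ = ∑ l, ‖M i l‖ * ∑ j, ‖N l j‖ * v j := by
        simp only [Finset.sum_mul, Finset.mul_sum]
        rw [Finset.sum_comm]
        exact Finset.sum_congr rfl fun l _ => Finset.sum_congr rfl fun j _ => by ring

lemma block_inl {m n : ℕ} (ω : ℝ) (B11 : Matrix (Fin m) (Fin m) ℂ) (B12 : Matrix (Fin m) (Fin n) ℂ)
    (B21 : Matrix (Fin n) (Fin m) ℂ) (B22 : Matrix (Fin n) (Fin n) ℂ)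
    (u : Fin m ⊕ Fin n → ℝ) (i : Fin m) :
    (omegaComp ω (fromBlocks B11 B12 B21 B22) *ᵥ u) (Sum.inl i)
      = (omegaComp ω B11 *ᵥ (u ∘ Sum.inl)) i - (cabs B12 *ᵥ (u ∘ Sum.inr)) i := by
  simp only [mulVec, dotProduct, omegaComp, cabs, of_apply, Fintype.sum_sum_type,
    fromBlocks_apply₁₁, fromBlocks_apply₁₂, Sum.inl.injEq, Function.comp_apply,
    reduceCtorEq, if_false]
  rw [sub_eq_add_neg, ← Finset.sum_neg_distrib]
  congr 1
  refine Finset.sum_congr rfl fun j _ => by ring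

lemma block_inr {m n : ℕ} (ω : ℝ) (B11 : Matrix (Fin m) (Fin m) ℂ) (B12 : Matrix (Fin m) (Fin n) ℂ)
    (B21 : Matrix (Fin n) (Fin m) ℂ) (B22 : Matrix (Fin n) (Fin n) ℂ)
    (u : Fin m ⊕ Fin n → ℝ) (i : Fin n) :
    (omegaComp ω (fromBlocks B11 B12 B21 B22) *ᵥ u) (Sum.inr i)
      = (omegaComp ω B22 *ᵥ (u ∘ Sum.inr)) i - (cabs B21 *ᵥ (u ∘ Sum.inl)) i := by
  simp only [mulVec, dotProduct, omegaComp, cabs, of_apply, Fintype.sum_sum_type,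
    fromBlocks_apply₂₁, fromBlocks_apply₂₂, Sum.inr.injEq, Function.comp_apply,
    reduceCtorEq, if_false]
  rw [sub_eq_add_neg, ← Finset.sum_neg_distrib, add_comm]
  congr 1
  refine Finset.sum_congr rfl fun j _ => by ring

lemma omega_pos_parts {k : ℕ} {ω : ℝ} (hω : ω ∈ Set.Icc (0:ℝ) 1)
    {A : Matrix (Fin k) (Fin k) ℂ} {u : Fin k → ℝ} (hu : ∀ i, 0 < u i)
    (h : ∀ i, 0 < (omegaComp ω A *ᵥ u) i) (i : Fin k) :
    ∑ j ∈ Finset.univ.erase i, ‖A i j‖ * u j < ‖A i i‖ * u i := by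
  have h1 := h i
  rw [omegaComp_mulVec] at h1
  have h2 : wlin ω (A i i) ≤ ‖A i i‖ := wlin_le_abs hω _
  nlinarith [(hu i), mul_le_mul_of_nonneg_right h2 (hu i).le]

lemma det_isUnit_of_omega {k : ℕ} {ω : ℝ} (hω : ω ∈ Set.Icc (0:ℝ) 1)
    {A : Matrix (Fin k) (Fin k) ℂ} {u : Fin k → ℝ} (hu : ∀ i, 0 < u i)
    (h : ∀ i, 0 < (omegaComp ω A *ᵥ u) i) : IsUnit A.det := by
  rw [isUnit_iff_ne_zero]
  intro hdet
  obtain ⟨v, hv0, hAv⟩ := (Matrix.exists_mulVec_eq_zero_iff).mpr hdet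
  obtain ⟨i, -, hmax⟩ := Finset.exists_max_image Finset.univ
    (fun j => ‖v j‖ / u j) (Finset.univ_nonempty_iff.mpr ⟨⟨0, by
      rcases Nat.eq_zero_or_pos k with h0 | h0
      · exact absurd (funext fun j => absurd j.2 (by omega)) hv0
      · exact h0⟩⟩)
  set r := ‖v i‖ / u i with hr
  have hvi : ‖v i‖ = r * u i := by rw [hr, div_mul_cancel₀ _ (hu i).ne']
  have hbound : ∀ j, ‖v j‖ ≤ r * u j := fun j => by
    have := hmax j (Finset.mem_univ j)
    rw [div_le_iff₀ (hu j)] at this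
    linarith [this]
  have hrpos : 0 < r := by
    obtain ⟨j, hj⟩ := Function.ne_iff.mp hv0
    have : 0 < ‖v j‖ := norm_pos_iff.mpr hj
    have := hbound j
    nlinarith [hu j]
  have hrow : A i i * v i = -∑ j ∈ Finset.univ.erase i, A i j * v j := by
    have := congrFun hAv i
    simp only [mulVec, dotProduct, Pi.zero_apply] at this
    rw [← Finset.add_sum_erase _ _ (Finset.mem_univ i)] at this
    linear_combination this
  have habs : ‖A i i‖ * ‖v i‖
      ≤ ∑ j ∈ Finset.univ.erase i, ‖A i j‖ * ‖v j‖ := by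
    rw [← norm_mul, hrow, norm_neg]
    calc ‖∑ j ∈ Finset.univ.erase i, A i j * v j‖
        ≤ ∑ j ∈ Finset.univ.erase i, ‖A i j * v j‖ := norm_sum_le _ _
      _ = _ := Finset.sum_congr rfl fun j _ => norm_mul _ _
  have hdom := omega_pos_parts hω hu h i
  have hsum : ∑ j ∈ Finset.univ.erase i, ‖A i j‖ * ‖v j‖
      ≤ r * ∑ j ∈ Finset.univ.erase i, ‖A i j‖ * u j := by
    rw [Finset.mul_sum]
    exact Finset.sum_le_sum fun j _ => by
      have := mul_le_mul_of_nonneg_left (hbound j) (norm_nonneg (A i j))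
      linarith [this]
  rw [hvi] at habs
  nlinarith [hdom, hrpos]

lemma schur_key {p q : ℕ} {ω : ℝ} (hω : ω ∈ Set.Icc (0:ℝ) 1)
    {A : Matrix (Fin p) (Fin p) ℂ} {X C : Matrix (Fin p) (Fin q) ℂ}
    {u : Fin p → ℝ} {v : Fin q → ℝ} (hu : ∀ i, 0 < u i) (hv : ∀ j, 0 < v j)
    (hAX : A * X = C)
    (hdom : ∀ i, (cabs C *ᵥ v) i + ∑ j ∈ Finset.univ.erase i, ‖A i j‖ * u j
      < wlin ω (A i i) * u i) :
    ∀ i, (cabs X *ᵥ v) i ≤ u i := by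
  by_contra hcon
  push_neg at hcon
  obtain ⟨k0, hk0⟩ := hcon
  set t : Fin p → ℝ := fun i => (cabs X *ᵥ v) i with ht
  obtain ⟨i, -, hmax⟩ := Finset.exists_max_image Finset.univ
    (fun j => t j / u j) (Finset.univ_nonempty_iff.mpr ⟨k0⟩)
  set r := t i / u i with hr
  have hti : t i = r * u i := by rw [hr, div_mul_cancel₀ _ (hu i).ne']
  have hbound : ∀ j, t j ≤ r * u j := fun j => by
    have := hmax j (Finset.mem_univ j)
    rw [div_le_iff₀ (hu j)] at this
    linarith
  have hr1 : 1 < r := by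
    have h1 := hmax k0 (Finset.mem_univ k0)
    have h2 : 1 < t k0 / u k0 := (one_lt_div (hu k0)).mpr hk0
    linarith
  -- row estimate at i
  have hrowj : ∀ j, ‖A i i‖ * ‖X i j‖
      ≤ ‖C i j‖ + ∑ l ∈ Finset.univ.erase i, ‖A i l‖ * ‖X l j‖ := by
    intro j
    have hc : A i i * X i j = C i j - ∑ l ∈ Finset.univ.erase i, A i l * X l j := by
      have := congrFun (congrFun hAX i) j
      rw [Matrix.mul_apply, ← Finset.add_sum_erase _ _ (Finset.mem_univ i)] at this
      linear_combination this
    calc ‖A i i‖ * ‖X i j‖ = ‖A i i * X i j‖ :=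
          (norm_mul _ _).symm
      _ = ‖C i j - ∑ l ∈ Finset.univ.erase i, A i l * X l j‖ := by rw [hc]
      _ ≤ ‖C i j‖ + ‖∑ l ∈ Finset.univ.erase i, A i l * X l j‖ := by
          rw [sub_eq_add_neg]
          exact (norm_add_le _ _).trans (by rw [norm_neg])
      _ ≤ ‖C i j‖ + ∑ l ∈ Finset.univ.erase i, ‖A i l‖ * ‖X l j‖ := by
          refine add_le_add (le_refl _) ?_
          exact (norm_sum_le _ _).trans
            (le_of_eq (Finset.sum_congr rfl fun l _ => norm_mul _ _))
  set a := ‖A i i‖ with ha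
  set c := (cabs C *ᵥ v) i with hcd
  set d := ∑ l ∈ Finset.univ.erase i, ‖A i l‖ * u l with hd
  have hsum : a * t i ≤ c + ∑ l ∈ Finset.univ.erase i, ‖A i l‖ * t l := by
    have e1 : a * t i = ∑ j, a * (‖X i j‖ * v j) := by
      rw [ht]; simp only [mulVec, dotProduct, cabs, of_apply]; rw [Finset.mul_sum]
    have e2 : ∀ l, ‖A i l‖ * t l
        = ∑ j, ‖A i l‖ * (‖X l j‖ * v j) := fun l => by
      rw [ht]; simp only [mulVec, dotProduct, cabs, of_apply]; rw [Finset.mul_sum]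
    rw [e1]
    calc ∑ j, a * (‖X i j‖ * v j)
        ≤ ∑ j, (‖C i j‖ * v j
            + ∑ l ∈ Finset.univ.erase i, ‖A i l‖ * (‖X l j‖ * v j)) := by
          refine Finset.sum_le_sum fun j _ => ?_
          have h2 := mul_le_mul_of_nonneg_right (hrowj j) (hv j).le
          rw [add_mul, Finset.sum_mul] at h2
          calc a * (‖X i j‖ * v j) = a * ‖X i j‖ * v j := by ring
            _ ≤ _ := h2.trans (le_of_eq (by
                refine congrArg _ (Finset.sum_congr rfl fun l _ => by ring)))
      _ = c + ∑ l ∈ Finset.univ.erase i, ‖A i l‖ * t l := by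
          rw [Finset.sum_add_distrib, Finset.sum_comm]
          have ec : ∑ j, ‖C i j‖ * v j = c := by
            rw [hcd]; simp only [mulVec, dotProduct, cabs, of_apply]
          rw [ec]
          exact congrArg _ (Finset.sum_congr rfl fun l _ => (e2 l).symm)
  have hsum2 : ∑ l ∈ Finset.univ.erase i, ‖A i l‖ * t l ≤ r * d := by
    rw [hd, Finset.mul_sum]
    refine Finset.sum_le_sum fun l _ => ?_
    have := mul_le_mul_of_nonneg_left (hbound l) (norm_nonneg (A i l))
    linarith
  have hcpos : 0 ≤ c := cabs_mulVec_nonneg _ _ (fun j => (hv j).le) i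
  have hdpos : 0 ≤ d :=
    Finset.sum_nonneg fun l _ => mul_nonneg (norm_nonneg _) (hu l).le
  have hwa : wlin ω (A i i) * u i ≤ a * u i :=
    mul_le_mul_of_nonneg_right (wlin_le_abs hω _) (hu i).le
  have hdomi := hdom i
  rw [hti] at hsum
  nlinarith [hu i, mul_pos (sub_pos.mpr hr1) (hu i)]

lemma omega_sub_ge {k : ℕ} {ω : ℝ} (hω : ω ∈ Set.Icc (0:ℝ) 1)
    (P Q : Matrix (Fin k) (Fin k) ℂ) (w : Fin k → ℝ) (hw : ∀ j, 0 ≤ w j) (i : Fin k) :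
    (omegaComp ω P *ᵥ w) i - (cabs Q *ᵥ w) i ≤ (omegaComp ω (P - Q) *ᵥ w) i := by
  rw [omegaComp_mulVec, omegaComp_mulVec]
  have e : (cabs Q *ᵥ w) i
      = ‖Q i i‖ * w i + ∑ j ∈ Finset.univ.erase i, ‖Q i j‖ * w j := by
    simp only [mulVec, dotProduct, cabs, of_apply]
    rw [← Finset.add_sum_erase _ _ (Finset.mem_univ i)]
  have h1 : (wlin ω (P i i) - ‖Q i i‖) * w i ≤ wlin ω ((P - Q) i i) * w i := by
    refine mul_le_mul_of_nonneg_right ?_ (hw i)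
    rw [Matrix.sub_apply, wlin_sub]
    have := abs_wlin_le hω (Q i i)
    have := le_abs_self (wlin ω (Q i i))
    linarith
  have h2 : ∑ j ∈ Finset.univ.erase i, ‖(P - Q) i j‖ * w j
      ≤ ∑ j ∈ Finset.univ.erase i, (‖P i j‖ + ‖Q i j‖) * w j := by
    refine Finset.sum_le_sum fun j _ => mul_le_mul_of_nonneg_right ?_ (hw j)
    rw [Matrix.sub_apply, sub_eq_add_neg]
    exact (norm_add_le _ _).trans (by rw [norm_neg])
  rw [e]
  have h3 : ∑ j ∈ Finset.univ.erase i, (‖P i j‖ + ‖Q i j‖) * w j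
      = ∑ j ∈ Finset.univ.erase i, ‖P i j‖ * w j
        + ∑ j ∈ Finset.univ.erase i, ‖Q i j‖ * w j := by
    rw [← Finset.sum_add_distrib]
    exact Finset.sum_congr rfl fun j _ => by ring
  nlinarith [h1, h2, h3]

lemma core {m n : ℕ} {ω : ℝ} (hω : ω ∈ Set.Icc (0:ℝ) 1)
    (B11 : Matrix (Fin m) (Fin m) ℂ) (B12 : Matrix (Fin m) (Fin n) ℂ)
    (B21 : Matrix (Fin n) (Fin m) ℂ) (B22 : Matrix (Fin n) (Fin n) ℂ)
    (u : Fin m ⊕ Fin n → ℝ) (hu : ∀ i, 0 < u i)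
    (h : ∀ i, 0 < (omegaComp ω (fromBlocks B11 B12 B21 B22) *ᵥ u) i) :
    IsUnit B11.det ∧ IsUnit B22.det ∧
    (∀ i, 0 < (omegaComp ω B11 *ᵥ (u ∘ Sum.inl)) i) ∧
    (∀ i, 0 < (omegaComp ω B22 *ᵥ (u ∘ Sum.inr)) i) ∧
    (∀ i, 0 < (omegaComp ω (B11 - B12 * B22⁻¹ * B21) *ᵥ (u ∘ Sum.inl)) i) ∧
    (∀ i, 0 < (omegaComp ω (B22 - B21 * B11⁻¹ * B12) *ᵥ (u ∘ Sum.inr)) i) := by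
  set u1 : Fin m → ℝ := u ∘ Sum.inl with hu1
  set u2 : Fin n → ℝ := u ∘ Sum.inr with hu2
  have hu1p : ∀ i, 0 < u1 i := fun i => hu (Sum.inl i)
  have hu2p : ∀ i, 0 < u2 i := fun i => hu (Sum.inr i)
  have hB11pos : ∀ i, 0 < (omegaComp ω B11 *ᵥ u1) i := fun i => by
    have h1 := h (Sum.inl i)
    rw [block_inl] at h1
    have := cabs_mulVec_nonneg B12 u2 (fun j => (hu2p j).le) i
    linarith
  have hB22pos : ∀ i, 0 < (omegaComp ω B22 *ᵥ u2) i := fun i => by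
    have h1 := h (Sum.inr i)
    rw [block_inr] at h1
    have := cabs_mulVec_nonneg B21 u1 (fun j => (hu1p j).le) i
    linarith
  have hdet11 : IsUnit B11.det := det_isUnit_of_omega hω hu1p hB11pos
  have hdet22 : IsUnit B22.det := det_isUnit_of_omega hω hu2p hB22pos
  refine ⟨hdet11, hdet22, hB11pos, hB22pos, ?_, ?_⟩
  · -- S11
    set X := B22⁻¹ * B21 with hX
    have hAX : B22 * X = B21 := by
      rw [hX, ← Matrix.mul_assoc, Matrix.mul_nonsing_inv _ hdet22, Matrix.one_mul]
    have hdom : ∀ i, (cabs B21 *ᵥ u1) i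
        + ∑ j ∈ Finset.univ.erase i, ‖B22 i j‖ * u2 j < wlin ω (B22 i i) * u2 i := by
      intro i
      have h1 := h (Sum.inr i)
      rw [block_inr] at h1
      rw [omegaComp_mulVec] at h1
      linarith
    have hXb := schur_key hω hu2p hu1p hAX hdom
    intro i
    have h1 := h (Sum.inl i)
    rw [block_inl] at h1
    have h2 := omega_sub_ge hω B11 (B12 * X) u1 (fun j => (hu1p j).le) i
    have h3 := cabs_mul_mulVec B12 X u1 (fun j => (hu1p j).le) i
    have h4 := cabs_mulVec_mono B12 hXb i
    rw [Matrix.mul_assoc]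
    linarith
  · -- S22
    set X := B11⁻¹ * B12 with hX
    have hAX : B11 * X = B12 := by
      rw [hX, ← Matrix.mul_assoc, Matrix.mul_nonsing_inv _ hdet11, Matrix.one_mul]
    have hdom : ∀ i, (cabs B12 *ᵥ u2) i
        + ∑ j ∈ Finset.univ.erase i, ‖B11 i j‖ * u1 j < wlin ω (B11 i i) * u1 i := by
      intro i
      have h1 := h (Sum.inl i)
      rw [block_inl] at h1
      rw [omegaComp_mulVec] at h1
      linarith
    have hXb := schur_key hω hu1p hu2p hAX hdom
    intro i
    have h1 := h (Sum.inr i)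
    rw [block_inr] at h1
    have h2 := omega_sub_ge hω B22 (B21 * X) u2 (fun j => (hu2p j).le) i
    have h3 := cabs_mul_mulVec B21 X u2 (fun j => (hu2p j).le) i
    have h4 := cabs_mulVec_mono B21 hXb i
    rw [Matrix.mul_assoc]
    linarith

lemma omegaComp_offdiag {N : Type*} [DecidableEq N] (ω : ℝ) (A : Matrix N N ℂ) :
    ∀ i j, i ≠ j → omegaComp ω A i j ≤ 0 := fun i j hij => by
  simp only [omegaComp, of_apply, if_neg hij]
  exact neg_nonpos.mpr (norm_nonneg _)

/-- If `B_ω` is a nonsingular M-matrix for a partitioned complex matrix `B`, then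
the diagonal blocks are invertible, the ω-comparison matrices of the diagonal blocks and of both
Schur complements are nonsingular M-matrices, and positivity of `B_ω·1` is inherited. -/
theorem stmt1 {m n : ℕ} (ω : ℝ) (hω : ω ∈ Set.Icc (0 : ℝ) 1)
    (B11 : Matrix (Fin m) (Fin m) ℂ) (B12 : Matrix (Fin m) (Fin n) ℂ)
    (B21 : Matrix (Fin n) (Fin m) ℂ) (B22 : Matrix (Fin n) (Fin n) ℂ)
    (hM : IsNonsingMMatrix (omegaComp ω (Matrix.fromBlocks B11 B12 B21 B22))) :
    IsUnit B11.det ∧ IsUnit B22.det ∧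
    IsNonsingMMatrix (omegaComp ω B11) ∧
    IsNonsingMMatrix (omegaComp ω B22) ∧
    IsNonsingMMatrix (omegaComp ω (B11 - B12 * B22⁻¹ * B21)) ∧
    IsNonsingMMatrix (omegaComp ω (B22 - B21 * B11⁻¹ * B12)) ∧
    ((∀ i, 0 < ((omegaComp ω (Matrix.fromBlocks B11 B12 B21 B22)) *ᵥ 1) i) →
      (∀ i, 0 < ((omegaComp ω B11) *ᵥ 1) i) ∧
      (∀ i, 0 < ((omegaComp ω B22) *ᵥ 1) i) ∧
      (∀ i, 0 < ((omegaComp ω (B11 - B12 * B22⁻¹ * B21)) *ᵥ 1) i) ∧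
      (∀ i, 0 < ((omegaComp ω (B22 - B21 * B11⁻¹ * B12)) *ᵥ 1) i)) := by
  obtain ⟨-, u, hu, hpos⟩ := hM
  obtain ⟨hd1, hd2, h11, h22, hs1, hs2⟩ := core hω B11 B12 B21 B22 u hu hpos
  refine ⟨hd1, hd2,
    ⟨omegaComp_offdiag ω _, _, fun i => hu (Sum.inl i), h11⟩,
    ⟨omegaComp_offdiag ω _, _, fun i => hu (Sum.inr i), h22⟩,
    ⟨omegaComp_offdiag ω _, _, fun i => hu (Sum.inl i), hs1⟩,
    ⟨omegaComp_offdiag ω _, _, fun i => hu (Sum.inr i), hs2⟩, ?_⟩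
  intro hone
  obtain ⟨-, -, g11, g22, gs1, gs2⟩ :=
    core hω B11 B12 B21 B22 (1 : Fin m ⊕ Fin n → ℝ) (fun _ => one_pos) hone
  exact ⟨g11, g22, gs1, gs2⟩
end
end
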